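/- Let ε^{(n)} → 0⁺ and λ_1^{(n)}, λ_2^{(n)} → 1 be positive sequences with |λ_1^{(n)} - λ_2^{(n)}|/(ε^{(n)})^{k/2} → 0 for k = 0,1,2 (regularity index at least 2). Then the coordinate sectional curvatures of the corresponding left-invariant metrics on SU(2) satisfy sec^{(n)}(e_0∧e_1) → 0, sec^{(n)}(e_1∧e_2) → 4, and sec^{(n)}(e_0∧e_2) → 0 as n → ∞. Conversely, if these three limits hold, then the regularity index is at least 2. -/

import Mathlib

open Filter Topology

/-- For an almost-Berger sequence (`ε⁽ⁿ⁾ → 0⁺`, `λᵢ⁽ⁿ⁾ → 1`), the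
regularity index is at least `2` (i.e. `(ε⁽ⁿ⁾)^{-k/2}|λ₁⁽ⁿ⁾-λ₂⁽ⁿ⁾| → 0` for
`k = 0, 1, 2`) if and only if the coordinate sectional curvatures converge to
`(0, 4, 0)`. -/
theorem sec_limits_iff_regularity_index_ge_two (ε l1 l2 : ℕ → ℝ)
    (hεpos : ∀ n, 0 < ε n) (hl1pos : ∀ n, 0 < l1 n) (hl2pos : ∀ n, 0 < l2 n)
    (hε : Tendsto ε atTop (𝓝 0))
    (h1 : Tendsto l1 atTop (𝓝 1)) (h2 : Tendsto l2 atTop (𝓝 1)) :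
    (∀ k : ℕ, k ≤ 2 →
      Tendsto (fun n => |l1 n - l2 n| / (ε n) ^ ((k : ℝ) / 2)) atTop (𝓝 0)) ↔
    (Tendsto (fun n => 1 / (l1 n * l2 n) * (ε n + 2 * (l2 n - l1 n)
        - (ε n)⁻¹ * (l2 n - l1 n) * (l1 n + 3 * l2 n))) atTop (𝓝 0) ∧
     Tendsto (fun n => 1 / (l1 n * l2 n) * (-3 * ε n + 2 * (l1 n + l2 n)
        + (ε n)⁻¹ * (l2 n - l1 n) ^ 2)) atTop (𝓝 4) ∧
     Tendsto (fun n => 1 / (l1 n * l2 n) * (ε n - 2 * (l2 n - l1 n)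
        + (ε n)⁻¹ * (l2 n - l1 n) * (l2 n + 3 * l1 n))) atTop (𝓝 0)) := by
  have hP : Tendsto (fun n => l1 n * l2 n) atTop (𝓝 1) := by
    simpa using h1.mul h2
  have hQ : Tendsto (fun n => 1 / (l1 n * l2 n)) atTop (𝓝 1) := by
    have := hP.inv₀ one_ne_zero
    rw [inv_one] at this
    exact this.congr fun n => (one_div _).symm
  have hd : Tendsto (fun n => l2 n - l1 n) atTop (𝓝 0) := by
    simpa using h2.sub h1
  constructor
  · intro hk
    have hk2 : Tendsto (fun n => |l1 n - l2 n| / ε n) atTop (𝓝 0) := by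
      have := hk 2 le_rfl
      have he : ∀ n, (ε n) ^ (((2:ℕ) : ℝ) / 2) = ε n := fun n => by
        norm_num
      simpa [he] using this
    have hf : Tendsto (fun n => (ε n)⁻¹ * (l2 n - l1 n)) atTop (𝓝 0) := by
      rw [tendsto_zero_iff_norm_tendsto_zero]
      refine hk2.congr fun n => ?_
      rw [Real.norm_eq_abs, abs_mul, abs_inv, abs_of_pos (hεpos n), abs_sub_comm,
        inv_mul_eq_div]
    have hdsq : Tendsto (fun n => (ε n)⁻¹ * (l2 n - l1 n) ^ 2) atTop (𝓝 0) := by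
      have := hf.mul hd
      rw [mul_zero] at this
      exact this.congr fun n => by ring
    refine ⟨?_, ?_, ?_⟩
    · have hin : Tendsto (fun n => ε n + 2 * (l2 n - l1 n)
          - (ε n)⁻¹ * (l2 n - l1 n) * (l1 n + 3 * l2 n)) atTop (𝓝 0) := by
        have := (hε.add (hd.const_mul 2)).sub (hf.mul (h1.add (h2.const_mul 3)))
        simpa using this
      simpa using hQ.mul hin
    · have hin : Tendsto (fun n => -3 * ε n + 2 * (l1 n + l2 n)
          + (ε n)⁻¹ * (l2 n - l1 n) ^ 2) atTop (𝓝 4) := by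
        have := ((hε.const_mul (-3)).add ((h1.add h2).const_mul 2)).add hdsq
        norm_num at this
        exact this.congr fun n => by ring
      simpa using hQ.mul hin
    · have hin : Tendsto (fun n => ε n - 2 * (l2 n - l1 n)
          + (ε n)⁻¹ * (l2 n - l1 n) * (l2 n + 3 * l1 n)) atTop (𝓝 0) := by
        have := (hε.sub (hd.const_mul 2)).add (hf.mul (h2.add (h1.const_mul 3)))
        simpa using this
      simpa using hQ.mul hin
  · rintro ⟨hA, hB, hC⟩
    have hsum : Tendsto (fun n => 1 / (l1 n * l2 n) * (ε n + 2 * (l2 n - l1 n)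
        - (ε n)⁻¹ * (l2 n - l1 n) * (l1 n + 3 * l2 n))
        + 1 / (l1 n * l2 n) * (ε n - 2 * (l2 n - l1 n)
        + (ε n)⁻¹ * (l2 n - l1 n) * (l2 n + 3 * l1 n))) atTop (𝓝 0) := by
      simpa using hA.add hC
    have hdsq : Tendsto (fun n => (ε n)⁻¹ * (l2 n - l1 n) ^ 2) atTop (𝓝 0) := by
      have h := hε.sub ((hP.mul hsum).div_const 2)
      norm_num at h
      refine h.congr fun n => ?_
      have e1 : ε n ≠ 0 := (hεpos n).ne'
      have e2 : l1 n ≠ 0 := (hl1pos n).ne'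
      have e3 : l2 n ≠ 0 := (hl2pos n).ne'
      field_simp
      ring
    have hdP : Tendsto (fun n => (ε n)⁻¹ * (l2 n - l1 n) * (l1 n + 3 * l2 n))
        atTop (𝓝 0) := by
      have h := (hε.add (hd.const_mul 2)).sub (hP.mul hA)
      norm_num at h
      refine h.congr fun n => ?_
      have e1 : ε n ≠ 0 := (hεpos n).ne'
      have e2 : l1 n ≠ 0 := (hl1pos n).ne'
      have e3 : l2 n ≠ 0 := (hl2pos n).ne'
      field_simp
      ring
    have hf : Tendsto (fun n => (ε n)⁻¹ * (l2 n - l1 n)) atTop (𝓝 0) := by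
      have h4 : Tendsto (fun n => l1 n + 3 * l2 n) atTop (𝓝 4) := by
        have := h1.add (h2.const_mul 3)
        norm_num at this
        exact this
      have h := hdP.div h4 (by norm_num)
      norm_num at h
      refine h.congr fun n => ?_
      have hne : l1 n + 3 * l2 n ≠ 0 := ne_of_gt (by linarith [hl1pos n, hl2pos n])
      exact mul_div_cancel_right₀ _ hne
    intro k hk
    interval_cases k
    · have habs : Tendsto (fun n => |l1 n - l2 n|) atTop (𝓝 0) := by
        have := (h1.sub h2).abs
        norm_num at this
        exact this
      simpa using habs
    · have hs : Tendsto (fun n => Real.sqrt ((ε n)⁻¹ * (l2 n - l1 n) ^ 2))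
          atTop (𝓝 0) := by
        have := (Real.continuous_sqrt.tendsto 0).comp hdsq
        rw [Real.sqrt_zero] at this
        exact this
      refine hs.congr fun n => ?_
      rw [Real.sqrt_mul (inv_nonneg.2 (hεpos n).le), Real.sqrt_sq_eq_abs,
        Real.sqrt_inv, abs_sub_comm, inv_mul_eq_div]
      congr 1
      rw [show ((1:ℕ) : ℝ) / 2 = (1/2 : ℝ) by norm_num, ← Real.sqrt_eq_rpow]
    · have h := hf.abs
      norm_num at h
      refine h.congr fun n => ?_
      rw [abs_of_pos (hεpos n), abs_sub_comm, inv_mul_eq_div]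
      congr 1
      norm_num
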